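/- For every (n+1)×(n+1) complex matrix E, the matrix X := (1/(2s))·E − (c/(4s²))·(F₂·E + E·F₁) + (c²/(4s³))·F₂·E·F₁ is the unique solution of the Sylvester equation (s·I_{n+1} + c·F₂)·X + X·(s·I_{n+1} + c·F₁) = E. -/

import Mathlib

noncomputable section

open Matrix

/-- Block matrix `[[T, col, 0], [row, d, 0], [0, 0, e]]` of size `(n+1) × (n+1)`,
with blocks of sizes `n-1, 1, 1`. -/
def blk (n : ℕ) (T : Fin (n-1) → Fin (n-1) → ℂ) (colv rowv : Fin (n-1) → ℂ)
    (d e : ℂ) : Matrix (Fin (n+1)) (Fin (n+1)) ℂ :=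
  Matrix.of fun i j =>
    if hi : (i : ℕ) < n - 1 then
      if hj : (j : ℕ) < n - 1 then T ⟨i, hi⟩ ⟨j, hj⟩
      else if (j : ℕ) = n - 1 then colv ⟨i, hi⟩ else 0
    else if (i : ℕ) = n - 1 then
      if hj : (j : ℕ) < n - 1 then rowv ⟨j, hj⟩
      else if (j : ℕ) = n - 1 then d else 0
    else if (j : ℕ) = n then e else 0

/-- The matrix `F₁ = [[(1/s)ξ♯ξᵀ, i ξ♯, 0], [i ξᵀ, −s, 0], [0, 0, 0]]`. -/
def F1mat (n : ℕ) (ξ ξs : Fin (n-1) → ℝ) (s : ℝ) :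
    Matrix (Fin (n+1)) (Fin (n+1)) ℂ :=
  blk n (fun a b => ((1 / s * ξs a * ξ b : ℝ) : ℂ))
    (fun a => Complex.I * ((ξs a : ℝ) : ℂ))
    (fun b => Complex.I * ((ξ b : ℝ) : ℂ))
    ((-s : ℝ) : ℂ) 0

/-- The matrix `F₂ = [[(1/s)ξ♯ξᵀ, −i((λ+2μ)/μ) ξ♯, 0], [−i(μ/(λ+2μ)) ξᵀ, −s, 0], [0, 0, 0]]`. -/
def F2mat (n : ℕ) (ξ ξs : Fin (n-1) → ℝ) (s lam mu : ℝ) :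
    Matrix (Fin (n+1)) (Fin (n+1)) ℂ :=
  blk n (fun a b => ((1 / s * ξs a * ξ b : ℝ) : ℂ))
    (fun a => -(Complex.I * (((lam + 2*mu)/mu * ξs a : ℝ) : ℂ)))
    (fun b => -(Complex.I * ((mu/(lam + 2*mu) * ξ b : ℝ) : ℂ)))
    ((-s : ℝ) : ℂ) 0

/-- `b₁ = i(λ+μ)·[[0, (1/μ) ξ♯, 0], [(1/(λ+2μ)) ξᵀ, 0, 0], [0, 0, 0]]`. -/
def b1mat (n : ℕ) (ξ ξs : Fin (n-1) → ℝ) (lam mu : ℝ) :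
    Matrix (Fin (n+1)) (Fin (n+1)) ℂ :=
  (Complex.I * ((lam + mu : ℝ) : ℂ)) •
    blk n (fun _ _ => 0)
      (fun a => ((1/mu * ξs a : ℝ) : ℂ))
      (fun b => ((1/(lam + 2*mu) * ξ b : ℝ) : ℂ)) 0 0

/-- `c₂ = −[[s²·I + ((λ+μ)/μ) ξ♯ξᵀ, 0, 0], [0, (μ/(λ+2μ)) s², 0], [0, 0, s²]]`. -/
def c2mat (n : ℕ) (ξ ξs : Fin (n-1) → ℝ) (s lam mu : ℝ) :
    Matrix (Fin (n+1)) (Fin (n+1)) ℂ :=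
  -(blk n
      (fun a b => ((s^2 * (if a = b then 1 else 0) + (lam + mu)/mu * ξs a * ξ b : ℝ) : ℂ))
      (fun _ => 0) (fun _ => 0)
      ((mu/(lam + 2*mu) * s^2 : ℝ) : ℂ) ((s^2 : ℝ) : ℂ))

/-- The principal symbol `p₁` of the thermoelastic Dirichlet-to-Neumann map. -/
def p1mat (n : ℕ) (ξ ξs : Fin (n-1) → ℝ) (s lam mu al : ℝ) :
    Matrix (Fin (n+1)) (Fin (n+1)) ℂ :=
  blk n
    (fun a b => ((mu * s * (if a = b then 1 else 0)
        + mu * (lam + mu)/((lam + 3*mu) * s) * ξs a * ξ b : ℝ) : ℂ))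
    (fun a => -(Complex.I * ((2 * mu^2/(lam + 3*mu) * ξs a : ℝ) : ℂ)))
    (fun b => Complex.I * ((2 * mu^2/(lam + 3*mu) * ξ b : ℝ) : ℂ))
    ((2 * mu * (lam + 2*mu)/(lam + 3*mu) * s : ℝ) : ℂ)
    ((al * s : ℝ) : ℂ)

/-- `A = blockdiag(μ·I, λ+2μ, α)`. -/
def Amat (n : ℕ) (lam mu al : ℝ) : Matrix (Fin (n+1)) (Fin (n+1)) ℂ :=
  blk n (fun a b => if a = b then ((mu : ℝ) : ℂ) else 0)
    (fun _ => 0) (fun _ => 0) ((lam + 2*mu : ℝ) : ℂ) ((al : ℝ) : ℂ)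

/-- `d₁ = [[0, iμ ξ♯, 0], [iλ ξᵀ, 0, 0], [0, 0, 0]]`. -/
def d1mat (n : ℕ) (ξ ξs : Fin (n-1) → ℝ) (lam mu : ℝ) :
    Matrix (Fin (n+1)) (Fin (n+1)) ℂ :=
  blk n (fun _ _ => 0)
    (fun a => Complex.I * ((mu * ξs a : ℝ) : ℂ))
    (fun b => Complex.I * ((lam * ξ b : ℝ) : ℂ)) 0 0

/-- `W = blockdiag(G⁻¹, 1, 1)`. -/
def Wmat (n : ℕ) (G : Matrix (Fin (n-1)) (Fin (n-1)) ℝ) :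
    Matrix (Fin (n+1)) (Fin (n+1)) ℂ :=
  blk n (fun a b => ((G⁻¹ a b : ℝ) : ℂ)) (fun _ => 0) (fun _ => 0) 1 1


lemma sum_fin_split {M : Type*} [AddCommMonoid M] (m : ℕ) (g : Fin (m+3) → M) :
    ∑ k, g k = (∑ a : Fin (m+1), g ⟨a, by omega⟩) + g ⟨m+1, by omega⟩ + g ⟨m+2, by omega⟩ := by
  rw [Fin.sum_univ_castSucc, Fin.sum_univ_castSucc]
  have h0 : ∑ a : Fin (m+1), g (Fin.castSucc (Fin.castSucc a))
      = ∑ a : Fin (m+1), g ⟨a, by omega⟩ :=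
    Finset.sum_congr rfl fun a _ => congrArg g (by ext; simp)
  have h1 : Fin.castSucc (Fin.last (m+1)) = (⟨m+1, by omega⟩ : Fin (m+3)) := by ext; simp
  have h2 : Fin.last (m+2) = (⟨m+2, by omega⟩ : Fin (m+3)) := rfl
  rw [h0, h1, h2]

lemma blk_mul (n : ℕ) (hn : 2 ≤ n)
    (T T' : Fin (n-1) → Fin (n-1) → ℂ) (c r c' r' : Fin (n-1) → ℂ) (d e d' e' : ℂ) :
    blk n T c r d e * blk n T' c' r' d' e' =
    blk n (fun a b => (∑ k, T a k * T' k b) + c a * r' b)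
      (fun a => (∑ k, T a k * c' k) + c a * d')
      (fun b => (∑ k, r k * T' k b) + d * r' b)
      ((∑ k, r k * c' k) + d * d') (e * e') := by
  obtain ⟨m, rfl⟩ : ∃ m, n = m + 2 := ⟨n - 2, by omega⟩
  ext i j
  rw [Matrix.mul_apply, sum_fin_split m]
  simp only [blk, Matrix.of_apply, show m+2-1 = m+1 from rfl]
  have tri : ∀ x : Fin (m+3), (x:ℕ) < m+1 ∨ (x:ℕ) = m+1 ∨ (x:ℕ) = m+2 := fun x => by omega
  rcases tri i with hi | hi | hi <;> rcases tri j with hj | hj | hj <;>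
    simp [hi, hj, Fin.is_lt, show ¬ (m+2 < m+1) from by omega,
      show (m+2:ℕ) ≠ m+1 from by omega, show (m+1:ℕ) ≠ m+2 from by omega,
      show ∀ x : Fin (m+1), ¬((x:ℕ) = m+2) from fun x => by omega,
      show ∀ x : Fin (m+1), ¬(m+1 < (x:ℕ)) from fun x => by omega,
        show ∀ x : Fin (m+1), (x:ℕ) ≤ m from fun x => by omega]

lemma blk_eq_zero (n : ℕ) (T : Fin (n-1) → Fin (n-1) → ℂ) (c r : Fin (n-1) → ℂ) (d e : ℂ)
    (hT : ∀ a b, T a b = 0) (hc : ∀ a, c a = 0) (hr : ∀ b, r b = 0)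
    (hd : d = 0) (he : e = 0) : blk n T c r d e = 0 := by
  ext i j
  simp only [blk, Matrix.of_apply, hT, hc, hr, hd, he, Matrix.zero_apply]
  split_ifs <;> rfl

lemma Fsq_zero (n : ℕ) (hn : 2 ≤ n) (ξ ξs : Fin (n-1) → ℝ) (s : ℝ) (hs : s ≠ 0)
    (hkey : ∑ k, ξ k * ξs k = s^2) (p q : ℂ) (hpq : p * q = -1) :
    (blk n (fun a b => ((1/s * ξs a * ξ b : ℝ) : ℂ)) (fun a => p * ((ξs a : ℝ) : ℂ))
        (fun b => q * ((ξ b : ℝ) : ℂ)) ((-s : ℝ) : ℂ) 0) *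
    (blk n (fun a b => ((1/s * ξs a * ξ b : ℝ) : ℂ)) (fun a => p * ((ξs a : ℝ) : ℂ))
        (fun b => q * ((ξ b : ℝ) : ℂ)) ((-s : ℝ) : ℂ) 0) = 0 := by
  have hsC : (s:ℂ) ≠ 0 := Complex.ofReal_ne_zero.mpr hs
  have hkeyC : (∑ k, (ξ k : ℂ) * (ξs k : ℂ)) = ((s:ℝ):ℂ)^2 := by exact_mod_cast hkey
  rw [blk_mul n hn]
  apply blk_eq_zero
  · intro a b
    have : ∀ k, ((1/s * ξs a * ξ k : ℝ):ℂ) * ((1/s * ξs k * ξ b : ℝ):ℂ)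
        = ((1/s * ξs a : ℝ):ℂ) * ((1/s * ξ b : ℝ):ℂ) * ((ξ k:ℂ) * (ξs k:ℂ)) := by
      intro k; push_cast; ring
    rw [Finset.sum_congr rfl fun k _ => this k, ← Finset.mul_sum, hkeyC]
    have : (p * (ξs a:ℂ)) * (q * (ξ b:ℂ)) = (p*q) * ((ξs a:ℂ) * (ξ b:ℂ)) := by ring
    rw [this, hpq]
    push_cast
    field_simp [hsC]
    ring
  · intro a
    have : ∀ k, ((1/s * ξs a * ξ k : ℝ):ℂ) * (p * (ξs k:ℂ))
        = ((1/s * ξs a : ℝ):ℂ) * p * ((ξ k:ℂ) * (ξs k:ℂ)) := by intro k; push_cast; ring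
    rw [Finset.sum_congr rfl fun k _ => this k, ← Finset.mul_sum, hkeyC]
    push_cast
    field_simp [hsC]
    ring
  · intro b
    have : ∀ k, (q * (ξ k:ℂ)) * ((1/s * ξs k * ξ b : ℝ):ℂ)
        = q * ((1/s * ξ b : ℝ):ℂ) * ((ξ k:ℂ) * (ξs k:ℂ)) := by intro k; push_cast; ring
    rw [Finset.sum_congr rfl fun k _ => this k, ← Finset.mul_sum, hkeyC]
    push_cast
    field_simp [hsC]
    ring
  · have : ∀ k, (q * (ξ k:ℂ)) * (p * (ξs k:ℂ)) = (p*q) * ((ξ k:ℂ) * (ξs k:ℂ)) := by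
      intro k; ring
    rw [Finset.sum_congr rfl fun k _ => this k, ← Finset.mul_sum, hkeyC, hpq]
    push_cast
    ring
  · simp

lemma sylv_ex {R : Type*} [Ring R] [Algebra ℂ R] (s c : ℂ) (hs : s ≠ 0)
    (F1 F2 : R) (h1 : F1 * F1 = 0) (h2 : F2 * F2 = 0) (E X : R)
    (hX : X = (1/(2*s)) • E - (c/(4*s^2)) • (F2*E + E*F1) + (c^2/(4*s^3)) • (F2*E*F1)) :
    (s•(1:R) + c•F2) * X + X * (s•(1:R) + c•F1) = E := by
  have h2' : ∀ x : R, F2 * (F2 * x) = 0 := fun x => by rw [← mul_assoc, h2, zero_mul]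
  subst hX
  simp only [mul_add, add_mul, mul_sub, sub_mul, smul_mul_assoc, mul_smul_comm, smul_smul,
    mul_assoc, h1, h2, h2', smul_zero, mul_zero, zero_mul, mul_one, one_mul, smul_add, smul_sub]
  match_scalars <;> field_simp <;> ring

lemma sylv_unique {R : Type*} [Ring R] [Algebra ℂ R] (s c : ℂ) (hs : s ≠ 0)
    (F1 F2 : R) (h1 : F1 * F1 = 0) (h2 : F2 * F2 = 0) (D : R)
    (h0 : (s•(1:R)+c•F2)*D + D*(s•(1:R)+c•F1) = 0) : D = 0 := by
  set A := s•(1:R)+c•F2 with hA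
  set B := s•(1:R)+c•F1 with hB
  have hAD : A * D = -(D * B) := by linear_combination (norm := noncomm_ring) h0
  have hsq : A*(A*D) = (D*B)*B := by
    rw [hAD, mul_neg, ← mul_assoc, hAD, neg_mul, neg_neg]
  have hAA : A*(A*D) = (s^2)•D + (2*s*c)•(F2*D) := by
    rw [hA]
    simp only [mul_add, add_mul, smul_mul_assoc, mul_smul_comm, smul_smul, one_mul, mul_one,
      ← mul_assoc, h2, zero_mul, smul_zero]
    module
  have hBB : (D*B)*B = (s^2)•D + (2*s*c)•(D*F1) := by
    rw [hB]
    simp only [mul_add, add_mul, smul_mul_assoc, mul_smul_comm, smul_smul, one_mul, mul_one,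
      mul_assoc, h1, mul_zero, smul_zero]
    module
  have hcomm : c•(F2*D) = c•(D*F1) := by
    have h := hsq
    rw [hAA, hBB] at h
    have h' : (2*s*c)•(F2*D) = (2*s*c)•(D*F1) := add_left_cancel h
    have h'' := congrArg (fun x => ((2*s)⁻¹ : ℂ) • x) h'
    simp only [smul_smul] at h''
    rwa [show (2*s)⁻¹ * (2*s*c) = c by field_simp] at h''
  have h0' : (2*s)•D + (2*c)•(D*F1) = 0 := by
    have h := h0
    rw [hA, hB] at h
    simp only [mul_add, add_mul, smul_mul_assoc, mul_smul_comm, one_mul, mul_one] at h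
    rw [hcomm] at h
    linear_combination (norm := module) h
  have h2s : (2*s : ℂ) ≠ 0 := by simp [hs]
  have hDF1 : D * F1 = 0 := by
    have h := congrArg (· * F1) h0'
    simp only [add_mul, smul_mul_assoc, zero_mul, mul_assoc, h1, mul_zero, smul_zero,
      add_zero] at h
    exact (smul_eq_zero.mp h).resolve_left h2s
  have hfin : (2*s)•D = 0 := by rwa [hDF1, smul_zero, add_zero] at h0'
  exact (smul_eq_zero.mp hfin).resolve_left h2s

/-- the explicit matrix X is the unique solution of the Sylvester equation
(s·I + c·F₂)·X + X·(s·I + c·F₁) = E. -/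
theorem stmt8 (n : ℕ) (hn : 2 ≤ n)
    (G : Matrix (Fin (n-1)) (Fin (n-1)) ℝ) (hG : G.PosDef)
    (ξ : Fin (n-1) → ℝ) (hξ : ξ ≠ 0)
    (ξs : Fin (n-1) → ℝ) (hξs : ξs = G.mulVec ξ)
    (s : ℝ) (hs : s = Real.sqrt (ξ ⬝ᵥ G.mulVec ξ))
    (lam mu : ℝ) (hmu : 0 < mu) (hlm : 0 ≤ lam + mu)
    (c : ℝ) (hc : c = (lam + mu)/(lam + 3*mu)) :
    ∀ E : Matrix (Fin (n+1)) (Fin (n+1)) ℂ,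
    ∀ X : Matrix (Fin (n+1)) (Fin (n+1)) ℂ,
    X = (1/(2*(s : ℂ))) • E
        - ((c : ℂ)/(4*(s : ℂ)^2)) • (F2mat n ξ ξs s lam mu * E + E * F1mat n ξ ξs s)
        + ((c : ℂ)^2/(4*(s : ℂ)^3)) • (F2mat n ξ ξs s lam mu * E * F1mat n ξ ξs s) →
    (((s : ℂ) • (1 : Matrix (Fin (n+1)) (Fin (n+1)) ℂ) + (c : ℂ) • F2mat n ξ ξs s lam mu) * X
        + X * ((s : ℂ) • (1 : Matrix (Fin (n+1)) (Fin (n+1)) ℂ) + (c : ℂ) • F1mat n ξ ξs s) = E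
      ∧ ∀ Y : Matrix (Fin (n+1)) (Fin (n+1)) ℂ,
        ((s : ℂ) • (1 : Matrix (Fin (n+1)) (Fin (n+1)) ℂ) + (c : ℂ) • F2mat n ξ ξs s lam mu) * Y
          + Y * ((s : ℂ) • (1 : Matrix (Fin (n+1)) (Fin (n+1)) ℂ) + (c : ℂ) • F1mat n ξ ξs s) = E
        → Y = X) := by
  -- basic positivity facts
  have hpos : 0 < ξ ⬝ᵥ G.mulVec ξ := by
    have := hG.dotProduct_mulVec_pos hξ
    simpa using this
  have hs0 : s ≠ 0 := by
    rw [hs]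
    exact ne_of_gt (Real.sqrt_pos.mpr hpos)
  have hsC : (s:ℂ) ≠ 0 := Complex.ofReal_ne_zero.mpr hs0
  have hkey : ∑ k, ξ k * ξs k = s^2 := by
    rw [hξs, hs, Real.sq_sqrt hpos.le]
    rfl
  have hmu2 : (0:ℝ) < lam + 2*mu := by nlinarith
  -- nilpotency of F1
  have h1 : F1mat n ξ ξs s * F1mat n ξ ξs s = 0 := by
    have := Fsq_zero n hn ξ ξs s hs0 hkey Complex.I Complex.I (by rw [Complex.I_mul_I])
    exact this
  -- nilpotency of F2
  have h2 : F2mat n ξ ξs s lam mu * F2mat n ξ ξs s lam mu = 0 := by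
    have hF2 : F2mat n ξ ξs s lam mu
        = blk n (fun a b => ((1/s * ξs a * ξ b : ℝ) : ℂ))
          (fun a => (-(Complex.I * (((lam + 2*mu)/mu : ℝ) : ℂ))) * ((ξs a : ℝ) : ℂ))
          (fun b => (-(Complex.I * ((mu/(lam + 2*mu) : ℝ) : ℂ))) * ((ξ b : ℝ) : ℂ))
          ((-s : ℝ) : ℂ) 0 := by
      have e1 : (fun a => -(Complex.I * (((lam + 2*mu)/mu * ξs a : ℝ) : ℂ)))
          = fun a : Fin (n-1) =>
            (-(Complex.I * (((lam + 2*mu)/mu : ℝ) : ℂ))) * ((ξs a : ℝ) : ℂ) := by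
        funext a; push_cast; ring
      have e2 : (fun b => -(Complex.I * ((mu/(lam + 2*mu) * ξ b : ℝ) : ℂ)))
          = fun b : Fin (n-1) =>
            (-(Complex.I * ((mu/(lam + 2*mu) : ℝ) : ℂ))) * ((ξ b : ℝ) : ℂ) := by
        funext b; push_cast; ring
      unfold F2mat
      rw [e1, e2]
    rw [hF2]
    apply Fsq_zero n hn ξ ξs s hs0 hkey
    have hab : ((((lam + 2*mu)/mu : ℝ)) : ℂ) * (((mu/(lam + 2*mu) : ℝ)) : ℂ) = 1 := by
      rw [← Complex.ofReal_mul,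
        show ((lam + 2*mu)/mu) * (mu/(lam + 2*mu)) = 1 by field_simp]
      simp
    rw [show (-(Complex.I * (((lam + 2*mu)/mu : ℝ) : ℂ)))
          * (-(Complex.I * ((mu/(lam + 2*mu) : ℝ) : ℂ)))
        = (Complex.I * Complex.I)
          * (((((lam + 2*mu)/mu : ℝ)) : ℂ) * (((mu/(lam + 2*mu) : ℝ)) : ℂ)) from by ring,
      hab, Complex.I_mul_I]
    ring
  intro E X hX
  have hex := sylv_ex (s:ℂ) (c:ℂ) hsC (F1mat n ξ ξs s) (F2mat n ξ ξs s lam mu) h1 h2 E X hX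
  refine ⟨hex, fun Y hY => ?_⟩
  have hD : ((s:ℂ)•(1:Matrix (Fin (n+1)) (Fin (n+1)) ℂ) + (c:ℂ)•F2mat n ξ ξs s lam mu)*(Y - X)
      + (Y - X)*((s:ℂ)•(1:Matrix (Fin (n+1)) (Fin (n+1)) ℂ) + (c:ℂ)•F1mat n ξ ξs s) = 0 := by
    rw [mul_sub, sub_mul]
    linear_combination (norm := module) hY - hex
  have := sylv_unique (s:ℂ) (c:ℂ) hsC (F1mat n ξ ξs s) (F2mat n ξ ξs s lam mu) h1 h2 (Y - X) hD
  exact sub_eq_zero.mp this
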